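/- Let d ≥ 1, Ω = [-1,1]^d, δ > 0, and Ω_δ = Ω \ B(0;δ). Let g, φ : ℝ^d → ℝ be continuously differentiable on a neighborhood of Ω, with g ≥ 0 on Ω, g(0) = 0, and a := inf_{x ∈ Ω_δ} g(x) > 0. Let ε > 0 and suppose sup_{x ∈ Ω} |φ(x) − g(x)| < min(a/2, ε/2) and |∂_i φ(x) − ∂_i g(x)| ≤ ε/2 for all x ∈ Ω and all i ∈ {1,…,d}. Then φ(x) − φ(0) > 0 for every x ∈ Ω_δ, and for any ᾱ > 0 the functions V(x) := |φ(x) − φ(0)| + ᾱ‖x‖ and h(x) := g(x) + ᾱ‖x‖ satisfy: |V(x) − h(x)| ≤ ε for all x ∈ Ω_δ, V is differentiable at every x in the interior of Ω_δ, and |∂_i V(x) − ∂_i h(x)| = |∂_i φ(x) − ∂_i g(x)| ≤ ε/2 for every x in the interior of Ω_δ and every i. -/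

import Mathlib

lemma grad_add_aux {d : ℕ} (f₁ f₂ : EuclideanSpace ℝ (Fin d) → ℝ) (x : EuclideanSpace ℝ (Fin d))
    (h1 : DifferentiableAt ℝ f₁ x) (h2 : DifferentiableAt ℝ f₂ x) :
    gradient (fun y => f₁ y + f₂ y) x = gradient f₁ x + gradient f₂ x := by
  unfold gradient
  rw [fderiv_fun_add h1 h2, map_add]

lemma grad_sub_const_aux {d : ℕ} (f : EuclideanSpace ℝ (Fin d) → ℝ) (x : EuclideanSpace ℝ (Fin d))
    (c : ℝ) : gradient (fun y => f y - c) x = gradient f x := by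
  unfold gradient
  rw [fderiv_sub_const]

/-- If `g, φ` are `C¹` on a neighborhood of `Ω = [-1,1]^d`, `g ≥ 0` on `Ω`
with `g 0 = 0` and `a := inf_{Ω_δ} g > 0`, `|φ - g| < min(a/2, ε/2)` on `Ω`, and the
partial derivatives of `φ` and `g` differ by at most `ε/2` on `Ω`, then
`φ x - φ 0 > 0` on `Ω_δ`, and for any `α > 0` the Lyapunov-Net
`V x = |φ x - φ 0| + α‖x‖` and target `h x = g x + α‖x‖` satisfy `|V x - h x| ≤ ε`
on `Ω_δ`, `V` is differentiable on the interior of `Ω_δ`, and there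
`∂ᵢV - ∂ᵢh = ∂ᵢφ - ∂ᵢg` has absolute value at most `ε/2`. -/
theorem stmt_9 (d : ℕ) (hd : 1 ≤ d) (δ ε : ℝ) (hδ : 0 < δ) (hε : 0 < ε)
    (Ω Ωδ : Set (EuclideanSpace ℝ (Fin d)))
    (hΩ : Ω = {x : EuclideanSpace ℝ (Fin d) | ∀ i, |x i| ≤ 1})
    (hΩδ : Ωδ = Ω \ Metric.ball 0 δ)
    (g φ : EuclideanSpace ℝ (Fin d) → ℝ)
    (hgC1 : ∃ U, IsOpen U ∧ Ω ⊆ U ∧ ContDiffOn ℝ 1 g U)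
    (hφC1 : ∃ U, IsOpen U ∧ Ω ⊆ U ∧ ContDiffOn ℝ 1 φ U)
    (hgnn : ∀ x ∈ Ω, 0 ≤ g x) (hg0 : g 0 = 0)
    (a : ℝ) (ha : a = sInf (g '' Ωδ)) (hapos : 0 < a)
    (hφg : ∀ x ∈ Ω, |φ x - g x| < min (a / 2) (ε / 2))
    (hgrad : ∀ x ∈ Ω, ∀ i, |gradient φ x i - gradient g x i| ≤ ε / 2)
    (α : ℝ) (hα : 0 < α)
    (V h : EuclideanSpace ℝ (Fin d) → ℝ)
    (hV : ∀ x, V x = |φ x - φ 0| + α * ‖x‖)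
    (hh : ∀ x, h x = g x + α * ‖x‖) :
    (∀ x ∈ Ωδ, 0 < φ x - φ 0) ∧
    (∀ x ∈ Ωδ, |V x - h x| ≤ ε) ∧
    (∀ x ∈ interior Ωδ, DifferentiableAt ℝ V x) ∧
    (∀ x ∈ interior Ωδ, ∀ i,
      gradient V x i - gradient h x i = gradient φ x i - gradient g x i ∧
      |gradient V x i - gradient h x i| ≤ ε / 2) := by
  have hsub : Ωδ ⊆ Ω := by rw [hΩδ]; exact Set.diff_subset
  have h0Ω : (0 : EuclideanSpace ℝ (Fin d)) ∈ Ω := by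
    rw [hΩ]; intro i; simp
  have hφ0 : |φ 0| < min (a / 2) (ε / 2) := by
    have := hφg 0 h0Ω; rwa [hg0, sub_zero] at this
  -- g ≥ a on Ωδ
  have hga : ∀ x ∈ Ωδ, a ≤ g x := by
    intro x hx
    rw [ha]
    exact csInf_le ⟨0, fun y ⟨z, hz, hzy⟩ => hzy ▸ hgnn z (hsub hz)⟩ ⟨x, hx, rfl⟩
  -- Part 1
  have part1 : ∀ x ∈ Ωδ, 0 < φ x - φ 0 := by
    intro x hx
    have h1 : |φ x - g x| < a / 2 := lt_of_lt_of_le (hφg x (hsub hx)) (min_le_left _ _)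
    have h2 : |φ 0| < a / 2 := lt_of_lt_of_le hφ0 (min_le_left _ _)
    have := hga x hx
    have := abs_lt.1 h1
    have := abs_lt.1 h2
    linarith [this.1, this.2]
  -- Part 2
  have part2 : ∀ x ∈ Ωδ, |V x - h x| ≤ ε := by
    intro x hx
    have h1 : |φ x - g x| < ε / 2 := lt_of_lt_of_le (hφg x (hsub hx)) (min_le_right _ _)
    have h2 : |φ 0| < ε / 2 := lt_of_lt_of_le hφ0 (min_le_right _ _)
    rw [hV, hh, abs_of_pos (part1 x hx)]
    have : φ x - φ 0 + α * ‖x‖ - (g x + α * ‖x‖) = (φ x - g x) - φ 0 := by ring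
    rw [this]
    calc |(φ x - g x) - φ 0| ≤ |φ x - g x| + |φ 0| := abs_sub _ _
      _ ≤ ε := by linarith
  -- setup for parts 3,4
  obtain ⟨U, hUo, hUΩ, hgU⟩ := hgC1
  obtain ⟨U', hU'o, hU'Ω, hφU⟩ := hφC1
  have hdiff : ∀ x ∈ interior Ωδ,
      DifferentiableAt ℝ φ x ∧ DifferentiableAt ℝ g x ∧
      DifferentiableAt ℝ (fun y : EuclideanSpace ℝ (Fin d) => α * ‖y‖) x ∧
      V =ᶠ[nhds x] (fun y => (φ y - φ 0) + α * ‖y‖) := by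
    intro x hx
    have hxδ : x ∈ Ωδ := interior_subset hx
    have hxΩ : x ∈ Ω := hsub hxδ
    have hx0 : x ≠ 0 := by
      intro hx0
      rw [hΩδ] at hxδ
      exact hxδ.2 (by simp [hx0, Metric.mem_ball, hδ])
    refine ⟨((hφU.contDiffAt (hU'o.mem_nhds (hU'Ω hxΩ))).differentiableAt one_ne_zero),
      ((hgU.contDiffAt (hUo.mem_nhds (hUΩ hxΩ))).differentiableAt one_ne_zero),
      ((differentiableAt_id.norm ℝ hx0).const_mul α), ?_⟩
    filter_upwards [isOpen_interior.mem_nhds hx] with y hy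
    rw [hV y, abs_of_pos (part1 y (interior_subset hy))]
  refine ⟨part1, part2, ?_, ?_⟩
  · intro x hx
    obtain ⟨hφd, hgd, hNd, hVeq⟩ := hdiff x hx
    exact (hVeq.differentiableAt_iff).2 (((hφd.sub_const _).add hNd))
  · intro x hx i
    obtain ⟨hφd, hgd, hNd, hVeq⟩ := hdiff x hx
    have hxΩ : x ∈ Ω := hsub (interior_subset hx)
    have hgV : gradient V x = gradient φ x + gradient (fun y : EuclideanSpace ℝ (Fin d) => α * ‖y‖) x := by
      rw [hVeq.gradient_eq, grad_add_aux _ _ _ (hφd.sub_const _) hNd, grad_sub_const_aux]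
    have hgh : gradient h x = gradient g x + gradient (fun y : EuclideanSpace ℝ (Fin d) => α * ‖y‖) x := by
      have : h = fun y => g y + α * ‖y‖ := funext hh
      rw [this, grad_add_aux _ _ _ hgd hNd]
    have key : gradient V x i - gradient h x i = gradient φ x i - gradient g x i := by
      rw [hgV, hgh]
      simp [PiLp.add_apply]
    exact ⟨key, key ▸ hgrad x hxΩ i⟩
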